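/- Let θ ∈ 𝕜. Then the following are equivalent: (i) there exists a feasible basis of V with respect to which the tridiagonal matrix representing A has constant row sum θ (each row of the matrix sums to θ); (ii) θ is an eigenvalue of A and u_i(θ) ≠ 0 for 0 ≤ i ≤ d, where the polynomials u_i are defined from the fixed feasible basis. -/

import Mathlib

open Polynomial

namespace Stmt18Aux

variable {𝕜 : Type*} [Field 𝕜] {d : ℕ}

/-- extend a `Fin (d+1)`-indexed vector by zero to all of `ℕ` -/
noncomputable def XX (x : Fin (d + 1) → 𝕜) (n : ℕ) : 𝕜 :=
  if h : n < d + 1 then x ⟨n, h⟩ else 0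

lemma XX_lt (x : Fin (d + 1) → 𝕜) {n : ℕ} (h : n < d + 1) : XX x n = x ⟨n, h⟩ := dif_pos h

lemma XX_coe (x : Fin (d + 1) → 𝕜) (i : Fin (d + 1)) : XX x i = x i := by
  rw [XX_lt x i.isLt]

lemma XX_ge (x : Fin (d + 1) → 𝕜) {n : ℕ} (h : ¬ n < d + 1) : XX x n = 0 := dif_neg h

lemma sum_fin_ite (k : ℕ) (f : Fin (d + 1) → 𝕜) :
    ∑ j : Fin (d + 1), (if (j : ℕ) = k then f j else 0) =
      if h : k < d + 1 then f ⟨k, h⟩ else 0 := by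
  split_ifs with h
  · rw [Finset.sum_eq_single (⟨k, h⟩ : Fin (d + 1))]
    · simp
    · intro j _ hj
      rw [if_neg]
      intro hjk
      exact hj (Fin.ext hjk)
    · simp
  · apply Finset.sum_eq_zero
    intro j _
    rw [if_neg]
    intro hjk
    exact h (hjk ▸ j.isLt)

lemma sum_ite_mul (k : ℕ) (g : 𝕜) (x : Fin (d + 1) → 𝕜) :
    ∑ j : Fin (d + 1), (if (j : ℕ) = k then g * x j else 0) = g * XX x k := by
  rw [sum_fin_ite]
  unfold XX
  split_ifs <;> simp

lemma row_sum (a b c : ℕ → 𝕜) (hbd : b d = 0) (hc0 : c 0 = 0)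
    (M : Matrix (Fin (d + 1)) (Fin (d + 1)) 𝕜)
    (hM : ∀ i j : Fin (d + 1), M i j =
      if (i : ℕ) = (j : ℕ) then a i
      else if (i : ℕ) + 1 = (j : ℕ) then b i
      else if (j : ℕ) + 1 = (i : ℕ) then c i else 0)
    (x : Fin (d + 1) → 𝕜) (i : Fin (d + 1)) :
    ∑ j, M i j * x j =
      c i * XX x ((i : ℕ) - 1) + a i * XX x i + b i * XX x ((i : ℕ) + 1) := by
  have key : ∀ j : Fin (d + 1), M i j * x j =
      (if (j : ℕ) = (i : ℕ) - 1 ∧ 0 < (i : ℕ) then c (i : ℕ) * x j else 0)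
      + (if (j : ℕ) = (i : ℕ) then a (i : ℕ) * x j else 0)
      + (if (j : ℕ) = (i : ℕ) + 1 then b (i : ℕ) * x j else 0) := by
    intro j
    rw [hM]
    split_ifs <;> first | omega | ring
  rw [Finset.sum_congr rfl (fun j _ => key j), Finset.sum_add_distrib, Finset.sum_add_distrib]
  have hA : ∑ j : Fin (d + 1), (if (j : ℕ) = (i : ℕ) then a (i : ℕ) * x j else 0)
      = a (i : ℕ) * XX x (i : ℕ) := sum_ite_mul _ _ _
  have hB : ∑ j : Fin (d + 1), (if (j : ℕ) = (i : ℕ) + 1 then b (i : ℕ) * x j else 0)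
      = b (i : ℕ) * XX x ((i : ℕ) + 1) := sum_ite_mul _ _ _
  have hC : ∑ j : Fin (d + 1), (if (j : ℕ) = (i : ℕ) - 1 ∧ 0 < (i : ℕ) then c (i : ℕ) * x j else 0)
      = c (i : ℕ) * XX x ((i : ℕ) - 1) := by
    rcases Nat.eq_zero_or_pos (i : ℕ) with h0 | hpos
    · rw [h0, hc0]
      simp [h0]
    · simp only [hpos, and_true]
      exact sum_ite_mul _ _ _
  rw [hA, hB, hC]

lemma rec_lemma (a b c : ℕ → 𝕜) (hb : ∀ i, i < d → b i ≠ 0)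
    (u : ℕ → Polynomial 𝕜) (hu0 : u 0 = 1)
    (hu : ∀ i, i < d → Polynomial.X * u i =
      Polynomial.C (c i) * u (i - 1) + Polynomial.C (a i) * u i + Polynomial.C (b i) * u (i + 1))
    (θv : 𝕜) (x : Fin (d + 1) → 𝕜)
    (hrow : ∀ n, n < d →
      c n * XX x (n - 1) + a n * XX x n + b n * XX x (n + 1) = θv * XX x n) :
    ∀ n, n ≤ d → XX x n = XX x 0 * (u n).eval θv := by
  intro n
  induction n using Nat.strong_induction_on with
  | _ n ih =>
    intro hn
    match n with
    | 0 => simp [hu0]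
    | (m + 1) =>
      have hm : m < d := by omega
      have h1 : XX x m = XX x 0 * (u m).eval θv := ih m (by omega) (by omega)
      have h2 : XX x (m - 1) = XX x 0 * (u (m - 1)).eval θv := ih (m - 1) (by omega) (by omega)
      have hr := hrow m hm
      have hp := congrArg (Polynomial.eval θv) (hu m hm)
      simp only [Polynomial.eval_mul, Polynomial.eval_add, Polynomial.eval_C,
        Polynomial.eval_X] at hp
      have hbne := hb m hm
      have key : b m * XX x (m + 1) = b m * (XX x 0 * (u (m + 1)).eval θv) := by
        linear_combination hr + (θv - a m) * h1 - c m * h2 + XX x 0 * hp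
      exact mul_left_cancel₀ hbne key


variable {V : Type*} [AddCommGroup V] [Module 𝕜 V]

lemma eig_iff (A : Module.End 𝕜 V) (v : Module.Basis (Fin (d + 1)) 𝕜 V) (θv : 𝕜) :
    Module.End.HasEigenvalue A θv ↔
      ∃ x : Fin (d + 1) → 𝕜, x ≠ 0 ∧
        ∀ i, ∑ j, (LinearMap.toMatrix v v A) i j * x j = θv * x i := by
  constructor
  · intro h
    obtain ⟨y, hy⟩ := h.exists_hasEigenvector
    refine ⟨fun i => v.repr y i, ?_, ?_⟩
    · intro h0
      apply hy.2
      have hr : v.repr y = 0 := Finsupp.ext fun i => congrFun h0 i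
      exact (LinearEquiv.map_eq_zero_iff v.repr).mp hr
    · intro i
      have key := congrFun (LinearMap.toMatrix_mulVec_repr v v A y) i
      have h2 : A y = θv • y := hy.apply_eq_smul
      calc ∑ j, (LinearMap.toMatrix v v A) i j * v.repr y j
          = ((LinearMap.toMatrix v v A).mulVec (v.repr y)) i := by
            simp [Matrix.mulVec, dotProduct]
        _ = v.repr (A y) i := key
        _ = θv * v.repr y i := by rw [h2, map_smul]; simp
  · rintro ⟨x, hx0, hx⟩
    set y := ∑ j, x j • v j with hy
    have hry : ⇑(v.repr y) = x := Module.Basis.repr_sum_self v x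
    have hy0 : y ≠ 0 := by
      intro h0
      apply hx0
      rw [← hry, h0]
      simp
    have hAy : A y = θv • y := by
      apply v.repr.injective
      ext i
      have key := congrFun (LinearMap.toMatrix_mulVec_repr v v A y) i
      have : v.repr (A y) i = θv * x i := by
        rw [← key]
        have : ((LinearMap.toMatrix v v A).mulVec (v.repr y)) i
            = ∑ j, (LinearMap.toMatrix v v A) i j * x j := by
          simp [Matrix.mulVec, dotProduct, hry]
        rw [this]
        exact hx i
      rw [this, map_smul]
      simp [hry]
    exact Module.End.hasEigenvalue_of_hasEigenvector
      ⟨Module.End.mem_eigenspace_iff.mpr hAy, hy0⟩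

lemma repr_smul_basis (v w : Module.Basis (Fin (d + 1)) 𝕜 V)
    (s : Fin (d + 1) → 𝕜) (hs : ∀ i, s i ≠ 0) (hw : ∀ i, w i = s i • v i) (y : V)
    (i : Fin (d + 1)) :
    w.repr y i = (s i)⁻¹ * v.repr y i := by
  have hy : ∑ j, ((s j)⁻¹ * v.repr y j) • w j = y := by
    have key : ∀ j : Fin (d + 1), ((s j)⁻¹ * v.repr y j) • w j = (v.repr y j) • v j := by
      intro j
      rw [hw j, smul_smul]
      congr 1
      field_simp
      exact mul_div_cancel_left₀ _ (hs j)
    rw [Finset.sum_congr rfl (fun j _ => key j), Module.Basis.sum_repr]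
  conv_lhs => rw [← hy]
  exact congrFun (Module.Basis.repr_sum_self w fun j => (s j)⁻¹ * v.repr y j) i

lemma toMatrix_smul_basis (A : Module.End 𝕜 V) (v w : Module.Basis (Fin (d + 1)) 𝕜 V)
    (s : Fin (d + 1) → 𝕜) (hs : ∀ i, s i ≠ 0) (hw : ∀ i, w i = s i • v i)
    (i j : Fin (d + 1)) :
    LinearMap.toMatrix w w A i j = (s i)⁻¹ * (s j * LinearMap.toMatrix v v A i j) := by
  rw [LinearMap.toMatrix_apply, LinearMap.toMatrix_apply,
    repr_smul_basis v w s hs hw, hw j, map_smul, map_smul]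
  simp [mul_comm]

end Stmt18Aux

/-- There is a feasible basis for which the matrix representing A has constant row sum θ
iff θ is an eigenvalue of A and uᵢ(θ) ≠ 0 for 0 ≤ i ≤ d. -/
theorem stmt_18 {𝕜 : Type*} [Field 𝕜] {V : Type*} [AddCommGroup V] [Module 𝕜 V]
    [FiniteDimensional 𝕜 V] {d : ℕ} (hdim : Module.finrank 𝕜 V = d + 1)
    (A : Module.End 𝕜 V)
    (Estar : Fin (d + 1) → Module.End 𝕜 V)
    (hidem : ∀ i j, Estar i * Estar j = if i = j then Estar i else 0)
    (hrank : ∀ i, Module.finrank 𝕜 (LinearMap.range (Estar i)) = 1)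
    (htri : ∀ i j : Fin (d + 1), 1 < |((i : ℕ) : ℤ) - ((j : ℕ) : ℤ)| → Estar i * A * Estar j = 0)
    (hirr : ∀ i j : Fin (d + 1), |((i : ℕ) : ℤ) - ((j : ℕ) : ℤ)| = 1 → Estar i * A * Estar j ≠ 0)
    (hd : 1 ≤ d)
    (θ : Fin (d + 1) → 𝕜) (hθ : Function.Injective θ)
    (E : Fin (d + 1) → Module.End 𝕜 V)
    (hEidem : ∀ i j, E i * E j = if i = j then E i else 0)
    (hErank : ∀ i, Module.finrank 𝕜 (LinearMap.range (E i)) = 1)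
    (hA : A = ∑ i, θ i • E i)
    (v : Module.Basis (Fin (d + 1)) 𝕜 V) (hfeas : ∀ i, v i ∈ LinearMap.range (Estar i))
    (a b c : ℕ → 𝕜)
    (hM : ∀ i j : Fin (d + 1), LinearMap.toMatrix v v A i j =
      if (i : ℕ) = (j : ℕ) then a i
      else if (i : ℕ) + 1 = (j : ℕ) then b i
      else if (j : ℕ) + 1 = (i : ℕ) then c i else 0)
    (ha : ∀ i : Fin (d + 1), a i = LinearMap.trace 𝕜 V (Estar i * A))
    (hb : ∀ i, i < d → b i ≠ 0) (hbd : b d = 0)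
    (hc : ∀ i, 0 < i → i ≤ d → c i ≠ 0) (hc0 : c 0 = 0)
    (u : ℕ → Polynomial 𝕜) (hu0 : u 0 = 1)
    (hu : ∀ i, i < d → Polynomial.X * u i =
      Polynomial.C (c i) * u (i - 1) + Polynomial.C (a i) * u i + Polynomial.C (b i) * u (i + 1))
    (hud : Polynomial.X * u d =
      Polynomial.C (c d) * u (d - 1) + Polynomial.C (a d) * u d +
        Polynomial.C (∏ h ∈ Finset.range d, b h)⁻¹ * u (d + 1))
    (θv : 𝕜) :
    (∃ w : Module.Basis (Fin (d + 1)) 𝕜 V,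
        (∀ i, w i ∈ LinearMap.range (Estar i)) ∧
        ∀ i : Fin (d + 1), (∑ j : Fin (d + 1), LinearMap.toMatrix w w A i j) = θv)
      ↔ (Module.End.HasEigenvalue A θv ∧ ∀ i ≤ d, (u i).eval θv ≠ 0) := by
  classical
  have hupe : ∀ n, n < d → θv * (u n).eval θv =
      c n * (u (n - 1)).eval θv + a n * (u n).eval θv + b n * (u (n + 1)).eval θv := by
    intro n hn
    have h := congrArg (Polynomial.eval θv) (hu n hn)
    simpa using h
  have heiff := Stmt18Aux.eig_iff A v θv
  constructor
  · rintro ⟨w, hwfeas, hwsum⟩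
    have hsex : ∀ i : Fin (d + 1), ∃ s : 𝕜, s ≠ 0 ∧ w i = s • v i := by
      intro i
      have h1 : (𝕜 ∙ v i) ≤ LinearMap.range (Estar i) :=
        (Submodule.span_singleton_le_iff_mem _ _).mpr (hfeas i)
      have h2 : (𝕜 ∙ v i) = LinearMap.range (Estar i) :=
        Submodule.eq_of_le_of_finrank_eq h1
          (by rw [hrank i, finrank_span_singleton (v.ne_zero i)])
      obtain ⟨s, hs⟩ := Submodule.mem_span_singleton.mp (h2 ▸ hwfeas i)
      refine ⟨s, ?_, hs.symm⟩
      rintro rfl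
      exact w.ne_zero i (by rw [← hs, zero_smul])
    choose s hs hws using hsex
    have hrow : ∀ i : Fin (d + 1),
        ∑ j, (LinearMap.toMatrix v v A) i j * s j = θv * s i := by
      intro i
      have h := hwsum i
      rw [Finset.sum_congr rfl
          (fun j _ => Stmt18Aux.toMatrix_smul_basis A v w s hs hws i j),
        ← Finset.mul_sum] at h
      have h2 : ∑ j, s j * (LinearMap.toMatrix v v A) i j = s i * θv := by
        rw [← h, ← mul_assoc, mul_inv_cancel₀ (hs i), one_mul]
      calc ∑ j, (LinearMap.toMatrix v v A) i j * s j
          = ∑ j, s j * (LinearMap.toMatrix v v A) i j := by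
            exact Finset.sum_congr rfl fun j _ => mul_comm _ _
        _ = s i * θv := h2
        _ = θv * s i := mul_comm _ _
    refine ⟨heiff.mpr ⟨s, fun h0 => hs 0 (congrFun h0 0), hrow⟩, ?_⟩
    have hrownat : ∀ n, n < d →
        c n * Stmt18Aux.XX s (n - 1) + a n * Stmt18Aux.XX s n
          + b n * Stmt18Aux.XX s (n + 1) = θv * Stmt18Aux.XX s n := by
      intro n hn
      have h1 := Stmt18Aux.row_sum a b c hbd hc0 (LinearMap.toMatrix v v A) hM s ⟨n, by omega⟩
      have h2 := hrow ⟨n, by omega⟩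
      rw [h1] at h2
      exact h2.trans (congrArg (θv * ·) (Stmt18Aux.XX_lt s (show n < d + 1 by omega)).symm)
    have hxu := Stmt18Aux.rec_lemma a b c hb u hu0 hu θv s hrownat
    intro n hn
    have h3 := hxu n hn
    have h4 : Stmt18Aux.XX s n ≠ 0 := by
      rw [Stmt18Aux.XX_lt s (show n < d + 1 by omega)]; exact hs _
    rw [h3] at h4
    exact right_ne_zero_of_mul h4
  · rintro ⟨heig, hune⟩
    obtain ⟨x, hx0, hxrow⟩ := heiff.mp heig
    have hrownat : ∀ n, n < d + 1 →
        c n * Stmt18Aux.XX x (n - 1) + a n * Stmt18Aux.XX x n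
          + b n * Stmt18Aux.XX x (n + 1) = θv * Stmt18Aux.XX x n := by
      intro n hn
      have h1 := Stmt18Aux.row_sum a b c hbd hc0 (LinearMap.toMatrix v v A) hM x ⟨n, hn⟩
      have h2 := hxrow ⟨n, hn⟩
      rw [h1] at h2
      exact h2.trans (congrArg (θv * ·) (Stmt18Aux.XX_lt x hn).symm)
    have hxu := Stmt18Aux.rec_lemma a b c hb u hu0 hu θv x
      (fun n hn => hrownat n (by omega))
    have hx00 : Stmt18Aux.XX x 0 ≠ 0 := by
      intro h0
      apply hx0
      funext i
      have h1 := hxu i (Nat.lt_succ_iff.mp i.isLt)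
      rw [h0, zero_mul, Stmt18Aux.XX_coe] at h1
      exact h1
    have hstar : c d * (u (d - 1)).eval θv + a d * (u d).eval θv
        = θv * (u d).eval θv := by
      have h1 := hrownat d (by omega)
      rw [hxu d le_rfl, hxu (d - 1) (by omega),
        Stmt18Aux.XX_ge x (show ¬ d + 1 < d + 1 by omega), mul_zero, add_zero] at h1
      exact mul_left_cancel₀ hx00 (by linear_combination h1)
    have hUne : ∀ i : Fin (d + 1), (u (i : ℕ)).eval θv ≠ 0 :=
      fun i => hune (i : ℕ) (Nat.lt_succ_iff.mp i.isLt)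
    refine ⟨v.unitsSMul (fun i => Units.mk0 ((u (i : ℕ)).eval θv) (hUne i)), ?_, ?_⟩
    all_goals
      have hws : ∀ k : Fin (d + 1),
          (v.unitsSMul (fun i => Units.mk0 ((u (i : ℕ)).eval θv) (hUne i))) k
            = (u (k : ℕ)).eval θv • v k := by
        intro k
        rw [Module.Basis.unitsSMul_apply, Units.smul_def]
        simp
    · intro i
      rw [hws i]
      exact Submodule.smul_mem _ _ (hfeas i)
    · intro i
      rw [Finset.sum_congr rfl (fun j _ =>
          Stmt18Aux.toMatrix_smul_basis A v _ (fun k => (u (k : ℕ)).eval θv) hUne hws i j),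
        ← Finset.mul_sum]
      have hsum : ∑ j : Fin (d + 1), (u (j : ℕ)).eval θv * (LinearMap.toMatrix v v A) i j
          = θv * (u (i : ℕ)).eval θv := by
        have h1 := Stmt18Aux.row_sum a b c hbd hc0 (LinearMap.toMatrix v v A) hM
          (fun j : Fin (d + 1) => (u (j : ℕ)).eval θv) i
        have hXXn : ∀ n, n < d + 1 →
            Stmt18Aux.XX (fun j : Fin (d + 1) => (u (j : ℕ)).eval θv) n
              = (u n).eval θv := by
          intro n hn; rw [Stmt18Aux.XX_lt _ hn]
        rw [Finset.sum_congr rfl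
            (fun (j : Fin (d + 1)) (_ : j ∈ Finset.univ) =>
              mul_comm ((u (j : ℕ)).eval θv) ((LinearMap.toMatrix v v A) i j)), h1,
          hXXn (i : ℕ) (by omega), hXXn ((i : ℕ) - 1) (by omega)]
        rcases lt_or_eq_of_le (Nat.lt_succ_iff.mp i.isLt) with hlt | heq
        · rw [hXXn ((i : ℕ) + 1) (by omega)]
          exact (hupe (i : ℕ) hlt).symm
        · rw [heq, Stmt18Aux.XX_ge _ (show ¬ d + 1 < d + 1 by omega), hbd, zero_mul, add_zero]
          exact hstar
      rw [hsum, mul_comm θv, ← mul_assoc, inv_mul_cancel₀ (hUne i), one_mul]
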